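/- Fix L ≥ 1, N = 4^L, M ≥ 1 and widths r₀,…,r_{L−1} ≥ 1, and let (I,J) be a partition of Fin N into disjoint subsets with I ∪ J = univ. Let S be the number of indices k ∈ [N/4] such that both I_{1,k} and J_{1,k} are nonempty. Then there exists a setting of the weights a^{0,α}, a^l, a^L such that the deep convolutional arithmetic circuit coefficient tensor A determined by these weights satisfies rank ⟦A⟧_{I,J} ≥ (min{r₀, M})^S. -/

import Mathlib

open MeasureTheory

noncomputable section

/-- Matricization of a tensor `A` of order `N` and dimension `M` in each mode, with
respect to a partition `(I, J)` of `Fin N` (given `I ∪ J = univ`). -/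
def matricize {N M : ℕ} (A : (Fin N → Fin M) → ℝ) (I J : Finset (Fin N))
    (hU : I ∪ J = Finset.univ) :
    Matrix ({n // n ∈ I} → Fin M) ({n // n ∈ J} → Fin M) ℝ :=
  Matrix.of fun u v => A fun n =>
    if h : n ∈ I then u ⟨n, h⟩
    else v ⟨n, by
      have hn : n ∈ I ∪ J := by rw [hU]; exact Finset.mem_univ n
      exact (Finset.mem_union.mp hn).resolve_left h⟩

/-- The index in `Fin (4 * n)` of position `i` inside the `t`-th block of size `n`. -/
def blockIdx {n : ℕ} (t : Fin 4) (i : Fin n) : Fin (4 * n) :=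
  ⟨t.val * n + i.val, by
    have h1 : i.val < n := i.isLt
    have h2 : t.val ≤ 3 := Nat.lt_succ_iff.mp t.isLt
    calc t.val * n + i.val < t.val * n + n := by omega
      _ = (t.val + 1) * n := by ring
      _ ≤ 4 * n := Nat.mul_le_mul_right n (by omega)⟩

/-- Fourth tensor power of an order-`n` tensor: an order-`4n` tensor. -/
def tpow4 {n M : ℕ} (T : (Fin n → Fin M) → ℝ) : (Fin (4 * n) → Fin M) → ℝ :=
  fun d => ∏ t : Fin 4, T (fun i => d (blockIdx t i))

/-- Recast an order-`n` tensor as an order-`m` tensor along an equality `n = m`. -/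
def castT {n m M : ℕ} (h : n = m) (T : (Fin n → Fin M) → ℝ) : (Fin m → Fin M) → ℝ :=
  fun d => T (fun i => d (Fin.cast h i))

theorem four_mul_pow (L : ℕ) (hL : 1 ≤ L) : 4 * 4 ^ (L - 1) = 4 ^ L := by
  obtain ⟨K, rfl⟩ := Nat.exists_eq_add_of_le hL
  rw [show 1 + K - 1 = K from by omega, pow_add, pow_one]

/-- The hidden tensors `φ^{l,γ}` of a deep convolutional arithmetic circuit, where
`φ^{0,α}` is the order-1 tensor given by `a0 α`, and
`φ^{l+1,γ} = ∑ α, a l γ α • (φ^{l,α})^{⊗4}`  (so `a l` plays the role of `a^{l+1}`). -/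
def phi (M : ℕ) (r : ℕ → ℕ) (a0 : Fin (r 0) → Fin M → ℝ)
    (a : (l : ℕ) → Fin (r (l + 1)) → Fin (r l) → ℝ) :
    (l : ℕ) → Fin (r l) → (Fin (4 ^ l) → Fin M) → ℝ
  | 0, γ => fun d => a0 γ (d ⟨0, by norm_num⟩)
  | (l + 1), γ => fun d => ∑ α : Fin (r l), a l γ α *
      castT (show 4 * 4 ^ l = 4 ^ (l + 1) by rw [pow_succ]; ring)
        (tpow4 (phi M r a0 a l α)) d

/-- The coefficient tensor of a deep convolutional arithmetic circuit:
`A = ∑ α, aL α • (φ^{L-1,α})^{⊗4}`, of order `N = 4^L`. -/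
def deepA (L M : ℕ) (hL : 1 ≤ L) (r : ℕ → ℕ) (a0 : Fin (r 0) → Fin M → ℝ)
    (a : (l : ℕ) → Fin (r (l + 1)) → Fin (r l) → ℝ)
    (aL : Fin (r (L - 1)) → ℝ) : (Fin (4 ^ L) → Fin M) → ℝ :=
  castT (four_mul_pow L hL)
    (fun d => ∑ α : Fin (r (L - 1)), aL α * tpow4 (phi M r a0 a (L - 1) α) d)

/-- `inducedCard I l k` is the cardinality of the induced set `I_{l,k}`: the number of
`m ∈ [4^l]` (zero-based) such that `k·4^l + m ∈ I`. -/
def inducedCard {N : ℕ} (I : Finset (Fin N)) (l k : ℕ) : ℕ :=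
  (I.filter (fun n => k * 4 ^ l ≤ n.val ∧ n.val < (k + 1) * 4 ^ l)).card

namespace Stmt5Aux

lemma pos4 {l : ℕ} (k : Fin (4 ^ l)) (t : Fin 4) : (k : ℕ) * 4 + (t : ℕ) < 4 * 4 ^ l := by
  have hk : (k : ℕ) + 1 ≤ 4 ^ l := k.isLt
  have ht : (t : ℕ) < 4 := t.isLt
  calc (k : ℕ) * 4 + (t : ℕ) < ((k : ℕ) + 1) * 4 := by omega
    _ ≤ 4 ^ l * 4 := Nat.mul_le_mul_right 4 hk
    _ = 4 * 4 ^ l := Nat.mul_comm _ _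

lemma posL (L : ℕ) (hL : 1 ≤ L) (k : Fin (4 ^ (L - 1))) (t : Fin 4) :
    (k : ℕ) * 4 + (t : ℕ) < 4 ^ L := by
  have h := pos4 k t
  rwa [four_mul_pow L hL] at h

/-- The basic order-4 "diagonal" tensor value. -/
def Ef (r0 M : ℕ) (d : Fin 4 → Fin M) : ℝ :=
  ∑ α : Fin r0, ∏ t : Fin 4, (if (α : ℕ) = ((d t : ℕ)) then (1 : ℝ) else 0)

lemma Ef_const {r0 M : ℕ} (d : Fin 4 → Fin M) (v : Fin M) (hd : ∀ t, d t = v)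
    (hv : (v : ℕ) < r0) : Ef r0 M d = 1 := by
  unfold Ef
  have h : ∀ α : Fin r0, (∏ t : Fin 4, (if (α : ℕ) = ((d t : ℕ)) then (1 : ℝ) else 0))
      = if α = ⟨(v : ℕ), hv⟩ then 1 else 0 := by
    intro α
    by_cases h : α = ⟨(v : ℕ), hv⟩
    · subst h; simp [hd]
    · rw [if_neg h]
      refine Finset.prod_eq_zero (Finset.mem_univ 0) ?_
      rw [hd 0, if_neg]
      intro hval
      exact h (Fin.ext hval)
  rw [Finset.sum_congr rfl (fun α _ => h α), Finset.sum_ite_eq' Finset.univ]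
  simp

lemma Ef_apart {r0 M : ℕ} (d : Fin 4 → Fin M) (t s : Fin 4) (h : d t ≠ d s) :
    Ef r0 M d = 0 := by
  unfold Ef
  refine Finset.sum_eq_zero fun α _ => ?_
  by_cases h1 : (α : ℕ) = (d t : ℕ)
  · refine Finset.prod_eq_zero (Finset.mem_univ s) (if_neg ?_)
    intro h2
    exact h (Fin.ext (by omega))
  · exact Finset.prod_eq_zero (Finset.mem_univ t) (if_neg h1)

/-- The positive constant accumulated by all-ones weights. -/
def Cc (r : ℕ → ℕ) : ℕ → ℝ
  | 0 => 1
  | (l + 1) => (r (l + 1) : ℝ) * (Cc r l) ^ 4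

lemma Cc_pos (r : ℕ → ℕ) : ∀ l, (∀ j, j ≤ l → 1 ≤ r j) → 0 < Cc r l
  | 0, _ => one_pos
  | (l + 1), h => by
    have h1 : 0 < Cc r l := Cc_pos r l fun j hj => h j (by omega)
    have h2 : (1 : ℝ) ≤ (r (l + 1) : ℝ) := by exact_mod_cast h (l + 1) le_rfl
    show 0 < (r (l + 1) : ℝ) * (Cc r l) ^ 4
    exact mul_pos (by linarith) (pow_pos h1 4)

/-- Reindexing equivalence for blocks. -/
def blkEquiv (l : ℕ) : Fin 4 × Fin (4 ^ l) ≃ Fin (4 ^ (l + 1)) where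
  toFun p := ⟨(p.1 : ℕ) * 4 ^ l + (p.2 : ℕ), by
    have h1 : (p.1 : ℕ) + 1 ≤ 4 := p.1.isLt
    have h2 : (p.2 : ℕ) < 4 ^ l := p.2.isLt
    have h3 : ((p.1 : ℕ) + 1) * 4 ^ l ≤ 4 * 4 ^ l := Nat.mul_le_mul_right _ h1
    have : (p.1 : ℕ) * 4 ^ l + (p.2 : ℕ) < ((p.1 : ℕ) + 1) * 4 ^ l := by
      rw [add_mul, one_mul]; omega
    rw [pow_succ, Nat.mul_comm (4 ^ l) 4]
    omega⟩
  invFun j := (⟨(j : ℕ) / 4 ^ l, by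
      have hj : (j : ℕ) < 4 ^ l * 4 := lt_of_lt_of_eq j.isLt (by rw [pow_succ])
      exact Nat.div_lt_of_lt_mul hj⟩,
    ⟨(j : ℕ) % 4 ^ l, Nat.mod_lt _ (Nat.pow_pos (by norm_num))⟩)
  left_inv p := by
    ext
    · show ((p.1 : ℕ) * 4 ^ l + (p.2 : ℕ)) / 4 ^ l = (p.1 : ℕ)
      rw [Nat.mul_comm, Nat.mul_add_div (Nat.pow_pos (by norm_num)),
        Nat.div_eq_of_lt p.2.isLt, Nat.add_zero]
    · show ((p.1 : ℕ) * 4 ^ l + (p.2 : ℕ)) % 4 ^ l = (p.2 : ℕ)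
      rw [Nat.mul_comm, Nat.mul_add_mod, Nat.mod_eq_of_lt p.2.isLt]
  right_inv j := by
    ext
    show (j : ℕ) / 4 ^ l * 4 ^ l + (j : ℕ) % 4 ^ l = (j : ℕ)
    rw [Nat.mul_comm]
    exact Nat.div_add_mod _ _

/-- All-ones-weights value of the sum of fourth powers of the `phi`s. -/
lemma sum_tpow (M : ℕ) (r : ℕ → ℕ) :
    ∀ (l : ℕ) (d : Fin (4 * 4 ^ l) → Fin M),
      (∑ α : Fin (r l),
          tpow4 (phi M r (fun α j => if (α : ℕ) = (j : ℕ) then (1 : ℝ) else 0)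
            (fun _ _ _ => 1) l α) d)
        = Cc r l * ∏ k : Fin (4 ^ l),
            Ef (r 0) M (fun t => d ⟨(k : ℕ) * 4 + (t : ℕ), pos4 k t⟩)
  | 0, d => by
    have hone : (∏ k : Fin (4 ^ 0),
        Ef (r 0) M (fun t => d ⟨(k : ℕ) * 4 + (t : ℕ), pos4 k t⟩))
        = Ef (r 0) M (fun t => d ⟨((⟨0, by norm_num⟩ : Fin (4 ^ 0)) : ℕ) * 4 + (t : ℕ),
            pos4 ⟨0, by norm_num⟩ t⟩) := by
      refine Finset.prod_eq_single_of_mem (⟨0, by norm_num⟩ : Fin (4 ^ 0))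
        (Finset.mem_univ _) fun b _ hb => absurd ?_ hb
      exact Fin.ext (Nat.lt_one_iff.mp (by simpa using b.isLt))
    rw [hone]
    simp only [tpow4, phi, Cc, one_mul]
    unfold Ef
    refine Finset.sum_congr rfl fun α _ => Finset.prod_congr rfl fun t _ => ?_
    have hidx : blockIdx t (⟨0, by norm_num⟩ : Fin (4 ^ 0))
        = (⟨((⟨0, by norm_num⟩ : Fin (4 ^ 0)) : ℕ) * 4 + (t : ℕ),
            pos4 ⟨0, by norm_num⟩ t⟩ : Fin (4 * 4 ^ 0)) :=
      Fin.ext (by simp [blockIdx])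
    exact congrArg (fun x : Fin M => if (α : ℕ) = (x : ℕ) then (1 : ℝ) else 0)
      (congrArg d hidx)
  | (l + 1), d => by
    have hcast : 4 * 4 ^ l = 4 ^ (l + 1) := by rw [pow_succ]; ring
    have hphi : ∀ (α : Fin (r (l + 1))) (d' : Fin (4 ^ (l + 1)) → Fin M),
        phi M r (fun α j => if (α : ℕ) = (j : ℕ) then (1 : ℝ) else 0)
            (fun _ _ _ => 1) (l + 1) α d'
          = Cc r l * ∏ k : Fin (4 ^ l),
              Ef (r 0) M (fun t => d' (Fin.cast hcast ⟨(k : ℕ) * 4 + (t : ℕ), pos4 k t⟩)) := by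
      intro α d'
      simp only [phi, one_mul, castT]
      exact sum_tpow M r l _
    simp only [tpow4]
    rw [Finset.sum_congr rfl (fun α _ => Finset.prod_congr rfl fun t' _ => hphi α _)]
    rw [Finset.prod_mul_distrib, Finset.prod_const, Finset.card_univ, Fintype.card_fin,
      Finset.sum_const, Finset.card_univ, Fintype.card_fin, nsmul_eq_mul]
    show (r (l + 1) : ℝ) * (Cc r l ^ 4 * _) = (r (l + 1) : ℝ) * Cc r l ^ 4 * _
    rw [← mul_assoc]
    congr 1
    rw [← Fintype.prod_prod_type'
      (f := fun (t' : Fin 4) (k : Fin (4 ^ l)) => Ef (r 0) M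
        (fun t => d (blockIdx t' (Fin.cast hcast ⟨(k : ℕ) * 4 + (t : ℕ), pos4 k t⟩))))]
    refine Fintype.prod_equiv (blkEquiv l) _ _ fun p => ?_
    congr 1
    funext t
    congr 1
    apply Fin.ext
    show (p.1 : ℕ) * 4 ^ (l + 1) + ((p.2 : ℕ) * 4 + (t : ℕ))
      = ((p.1 : ℕ) * 4 ^ l + (p.2 : ℕ)) * 4 + (t : ℕ)
    rw [pow_succ]
    ring

lemma deepA_eq (L M : ℕ) (hL : 1 ≤ L) (r : ℕ → ℕ) (d : Fin (4 ^ L) → Fin M) :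
    deepA L M hL r (fun α j => if (α : ℕ) = (j : ℕ) then (1 : ℝ) else 0)
        (fun _ _ _ => 1) (fun _ => 1) d
      = Cc r (L - 1) * ∏ k : Fin (4 ^ (L - 1)),
          Ef (r 0) M (fun t => d ⟨(k : ℕ) * 4 + (t : ℕ), posL L hL k t⟩) := by
  simp only [deepA, castT, one_mul]
  rw [sum_tpow M r (L - 1)]
  rfl

/-- A matrix with an embedded nonzero diagonal has rank at least the diagonal size. -/
lemma rank_ge_card {m n ι : Type} [Fintype m] [Fintype n] [Fintype ι] [DecidableEq ι]
    [DecidableEq n] (A : Matrix m n ℝ) (u : ι → m) (v : ι → n) (c : ℝ) (hc : c ≠ 0)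
    (h : ∀ i j, A (u i) (v j) = if i = j then c else 0) :
    Fintype.card ι ≤ A.rank := by
  set w : ι → (m → ℝ) := fun j x => A x (v j) with hwdef
  have hmem : ∀ j, w j ∈ LinearMap.range A.mulVecLin := by
    intro j
    refine ⟨fun y => if y = v j then 1 else 0, ?_⟩
    funext x
    simp only [Matrix.mulVecLin_apply, Matrix.mulVec, dotProduct, mul_ite, mul_one,
      mul_zero]
    rw [Finset.sum_ite_eq' Finset.univ]
    simp [hwdef]
  have hli : LinearIndependent ℝ w := by
    rw [Fintype.linearIndependent_iff]
    intro g hg i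
    have h2 := congrFun hg (u i)
    simp only [Finset.sum_apply, Pi.smul_apply, smul_eq_mul, hwdef, Pi.zero_apply] at h2
    have h3 : ∑ j : ι, g j * A (u i) (v j) = ∑ j : ι, if i = j then g j * c else 0 :=
      Finset.sum_congr rfl fun j _ => by rw [h i j]; split <;> simp
    rw [h3, Finset.sum_ite_eq Finset.univ] at h2
    simp only [Finset.mem_univ, if_true] at h2
    rcases mul_eq_zero.mp h2 with h4 | h4
    · exact h4
    · exact absurd h4 hc
  have hli2 : LinearIndependent ℝ
      (fun j => (⟨w j, hmem j⟩ : ↥(LinearMap.range A.mulVecLin))) := by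
    apply LinearIndependent.of_comp (LinearMap.range A.mulVecLin).subtype
    exact hli
  exact hli2.fintype_card_le_finrank

end Stmt5Aux

open Stmt5Aux in
theorem stmt5 (L M : ℕ) (hL : 1 ≤ L) (hM : 1 ≤ M) (r : ℕ → ℕ)
    (hr : ∀ l, l < L → 1 ≤ r l)
    (I J : Finset (Fin (4 ^ L))) (hdisj : Disjoint I J) (hU : I ∪ J = Finset.univ)
    (S : ℕ)
    (hS : S = (Finset.univ.filter (fun k : Fin (4 ^ (L - 1)) =>
        0 < inducedCard I 1 k.val ∧ 0 < inducedCard J 1 k.val)).card) :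
    ∃ (a0 : Fin (r 0) → Fin M → ℝ)
      (a : (l : ℕ) → Fin (r (l + 1)) → Fin (r l) → ℝ)
      (aL : Fin (r (L - 1)) → ℝ),
      (min (r 0) M) ^ S ≤ (matricize (deepA L M hL r a0 a aL) I J hU).rank := by
  classical
  have hr0 : 1 ≤ r 0 := hr 0 (by omega)
  set m := min (r 0) M with hmdef
  have hm : 1 ≤ m := le_min hr0 hM
  have hmM : m ≤ M := min_le_right _ _
  have hmr0 : m ≤ r 0 := min_le_left _ _
  refine ⟨(fun α j => if (α : ℕ) = (j : ℕ) then (1 : ℝ) else 0),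
    (fun _ _ _ => 1), (fun _ => 1), ?_⟩
  set K : Finset (Fin (4 ^ (L - 1))) := Finset.univ.filter
    (fun k => 0 < inducedCard I 1 k.val ∧ 0 < inducedCard J 1 k.val) with hKdef
  have hblk : ∀ n : Fin (4 ^ L), n.val / 4 < 4 ^ (L - 1) := by
    intro n
    have h1 : (n : ℕ) < 4 * 4 ^ (L - 1) := lt_of_lt_of_eq n.isLt (four_mul_pow L hL).symm
    omega
  set blk : Fin (4 ^ L) → Fin (4 ^ (L - 1)) := fun n => ⟨n.val / 4, hblk n⟩ with hblkdef
  set w : ({k // k ∈ K} → Fin m) → Fin (4 ^ L) → Fin M := fun f n =>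
    if h : blk n ∈ K then Fin.castLE hmM (f ⟨blk n, h⟩) else ⟨0, hM⟩ with hwdef
  have hCpos : 0 < Cc r (L - 1) := Cc_pos r (L - 1) (fun j hj => hr j (by omega))
  -- the key diagonal computation
  have key : ∀ f g : {k // k ∈ K} → Fin m,
      matricize (deepA L M hL r (fun α j => if (α : ℕ) = (j : ℕ) then (1 : ℝ) else 0)
          (fun _ _ _ => 1) (fun _ => 1)) I J hU
        (fun n => w f n.1) (fun n => w g n.1)
      = if f = g then Cc r (L - 1) else 0 := by
    intro f g
    set dfg : Fin (4 ^ L) → Fin M := fun n => if n ∈ I then w f n else w g n with hdfg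
    have harg : (fun n : Fin (4 ^ L) => if _h : n ∈ I then w f n else w g n) = dfg := by
      funext n
      by_cases hn : n ∈ I
      · rw [dif_pos hn, hdfg]
        simp only [if_pos hn]
      · rw [dif_neg hn, hdfg]
        simp only [if_neg hn]
    have hentry : matricize (deepA L M hL r
          (fun α j => if (α : ℕ) = (j : ℕ) then (1 : ℝ) else 0)
          (fun _ _ _ => 1) (fun _ => 1)) I J hU
        (fun n => w f n.1) (fun n => w g n.1)
      = deepA L M hL r (fun α j => if (α : ℕ) = (j : ℕ) then (1 : ℝ) else 0)
          (fun _ _ _ => 1) (fun _ => 1) dfg :=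
      congrArg (deepA L M hL r (fun α j => if (α : ℕ) = (j : ℕ) then (1 : ℝ) else 0)
          (fun _ _ _ => 1) (fun _ => 1)) harg
    rw [hentry, deepA_eq]
    have hblkidx : ∀ (k : Fin (4 ^ (L - 1))) (t : Fin 4),
        blk ⟨(k : ℕ) * 4 + (t : ℕ), posL L hL k t⟩ = k := by
      intro k t
      apply Fin.ext
      show ((k : ℕ) * 4 + (t : ℕ)) / 4 = (k : ℕ)
      have := t.isLt
      omega
    by_cases hfg : f = g
    · rw [if_pos hfg]
      have hcf : ∀ n, dfg n = w f n := by
        intro n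
        by_cases hn : n ∈ I
        · simp only [hdfg, if_pos hn]
        · simp only [hdfg, if_neg hn]; rw [hfg]
      have hone : ∀ k : Fin (4 ^ (L - 1)), k ∈ (Finset.univ : Finset (Fin (4 ^ (L - 1)))) →
          Ef (r 0) M (fun t => dfg ⟨(k : ℕ) * 4 + (t : ℕ), posL L hL k t⟩) = 1 := by
        intro k _
        refine Ef_const _ (if h : k ∈ K then Fin.castLE hmM (f ⟨k, h⟩) else ⟨0, hM⟩)
          (fun t => ?_) ?_
        · simp only [hcf, hwdef, hblkidx k t]
        · split
          · simp only [Fin.coe_castLE]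
            exact lt_of_lt_of_le (Fin.is_lt _) hmr0
          · exact hr0
      rw [Finset.prod_eq_one hone, mul_one]
    · rw [if_neg hfg]
      have hex : ∃ k0 : {k // k ∈ K}, f k0 ≠ g k0 := by
        by_contra hcon
        push_neg at hcon
        exact hfg (funext hcon)
      obtain ⟨k0, hk0⟩ := hex
      have hk0mem : (k0 : Fin (4 ^ (L - 1))) ∈ Finset.univ.filter
          (fun k : Fin (4 ^ (L - 1)) =>
            0 < inducedCard I 1 k.val ∧ 0 < inducedCard J 1 k.val) := k0.2
      rw [Finset.mem_filter] at hk0mem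
      obtain ⟨-, hI0, hJ0⟩ := hk0mem
      rw [inducedCard, Finset.card_pos] at hI0 hJ0
      obtain ⟨nI, hnI⟩ := hI0
      obtain ⟨nJ, hnJ⟩ := hJ0
      rw [Finset.mem_filter] at hnI hnJ
      obtain ⟨hnImem, hnIlo, hnIhi⟩ := hnI
      obtain ⟨hnJmem, hnJlo, hnJhi⟩ := hnJ
      norm_num at hnIlo hnIhi hnJlo hnJhi
      have htI : nI.val - (k0 : Fin (4 ^ (L - 1))).val * 4 < 4 := by omega
      have htJ : nJ.val - (k0 : Fin (4 ^ (L - 1))).val * 4 < 4 := by omega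
      have hzero : Ef (r 0) M (fun t => dfg ⟨((k0 : Fin (4 ^ (L - 1))) : ℕ) * 4 + (t : ℕ),
          posL L hL (k0 : Fin (4 ^ (L - 1))) t⟩) = 0 := by
        refine Ef_apart _ ⟨_, htI⟩ ⟨_, htJ⟩ ?_
        have heqI : (⟨((k0 : Fin (4 ^ (L - 1))) : ℕ) * 4 +
            ((⟨nI.val - (k0 : Fin (4 ^ (L - 1))).val * 4, htI⟩ : Fin 4) : ℕ),
            posL L hL _ ⟨_, htI⟩⟩ : Fin (4 ^ L)) = nI := Fin.ext (by simp; omega)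
        have heqJ : (⟨((k0 : Fin (4 ^ (L - 1))) : ℕ) * 4 +
            ((⟨nJ.val - (k0 : Fin (4 ^ (L - 1))).val * 4, htJ⟩ : Fin 4) : ℕ),
            posL L hL _ ⟨_, htJ⟩⟩ : Fin (4 ^ L)) = nJ := Fin.ext (by simp; omega)
        show dfg _ ≠ dfg _
        rw [heqI, heqJ]
        have hnJnotI : nJ ∉ I := Finset.disjoint_right.mp hdisj hnJmem
        have hblkI : blk nI = (k0 : Fin (4 ^ (L - 1))) :=
          Fin.ext (by show nI.val / 4 = _; omega)
        have hblkJ : blk nJ = (k0 : Fin (4 ^ (L - 1))) :=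
          Fin.ext (by show nJ.val / 4 = _; omega)
        have hdI : dfg nI = Fin.castLE hmM (f k0) := by
          simp only [hdfg, if_pos hnImem, hwdef, hblkI]
          rw [dif_pos k0.2]
        have hdJ : dfg nJ = Fin.castLE hmM (g k0) := by
          simp only [hdfg, if_neg hnJnotI, hwdef, hblkJ]
          rw [dif_pos k0.2]
        rw [hdI, hdJ]
        intro hcon
        apply hk0
        apply Fin.ext
        have := congrArg Fin.val hcon
        simpa using this
      exact mul_eq_zero_of_right _
        (Finset.prod_eq_zero (Finset.mem_univ (k0 : Fin (4 ^ (L - 1)))) hzero)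
  -- conclude via the rank bound
  have hrank := rank_ge_card
    (matricize (deepA L M hL r (fun α j => if (α : ℕ) = (j : ℕ) then (1 : ℝ) else 0)
      (fun _ _ _ => 1) (fun _ => 1)) I J hU)
    (fun f n => w f n.1) (fun g n => w g n.1) (Cc r (L - 1)) (ne_of_gt hCpos) key
  calc m ^ S = Fintype.card ({k // k ∈ K} → Fin m) := by
        rw [Fintype.card_fun, Fintype.card_fin, Fintype.card_coe, hS, hKdef]
    _ ≤ _ := hrank
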